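/- Let n ≥ 1 be an integer and k ≥ 2 an integer. The function q ↦ γ_k(n/q) is strictly convex on the interval (1, ∞). -/

import Mathlib

open Real

/-- The spectral function `γ_k(x) = Γ(x) Γ(n − x + k) / (Γ(n − x) Γ(x + k))`. -/
noncomputable def gammaFun (n k : ℕ) (x : ℝ) : ℝ :=
  Gamma x * Gamma ((n : ℝ) - x + k) / (Gamma ((n : ℝ) - x) * Gamma (x + k))

namespace GammaAux

noncomputable def gfun (n j : ℕ) (q : ℝ) : ℝ := (((n : ℝ) + j) * q - n) / ((j : ℝ) * q + n)

noncomputable def afun (n j : ℕ) (q : ℝ) : ℝ := ((n : ℝ) + j) / (((n : ℝ) + j) * q - n)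

noncomputable def bfun (n j : ℕ) (q : ℝ) : ℝ := (j : ℝ) / ((j : ℝ) * q + n)

noncomputable def Sfun (n k : ℕ) (q : ℝ) : ℝ :=
  ∑ j ∈ Finset.range k, (afun n j q - bfun n j q)

noncomputable def Ffun (n k : ℕ) (q : ℝ) : ℝ := ∏ j ∈ Finset.range k, gfun n j q

variable {n j k : ℕ} {q : ℝ}

lemma den_pos (hn : 1 ≤ n) (hq : 1 < q) : 0 < (j : ℝ) * q + n := by
  have h1 : (1 : ℝ) ≤ n := by exact_mod_cast hn
  have h0 : (0 : ℝ) ≤ j := Nat.cast_nonneg j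
  nlinarith

lemma num_pos (hn : 1 ≤ n) (hq : 1 < q) : 0 < ((n : ℝ) + j) * q - n := by
  have h1 : (1 : ℝ) ≤ n := by exact_mod_cast hn
  have h0 : (0 : ℝ) ≤ j := Nat.cast_nonneg j
  nlinarith

lemma gfun_pos (hn : 1 ≤ n) (hq : 1 < q) : 0 < gfun n j q :=
  div_pos (num_pos hn hq) (den_pos hn hq)

lemma Ffun_pos (hn : 1 ≤ n) (hq : 1 < q) : 0 < Ffun n k q :=
  Finset.prod_pos fun _ _ => gfun_pos hn hq

lemma d_pos (hn : 1 ≤ n) (hq : 1 < q) : 0 < afun n j q - bfun n j q := by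
  have h1 := num_pos (n := n) (j := j) hn hq
  have h2 := den_pos (n := n) (j := j) hn hq
  have h1' : (1 : ℝ) ≤ n := by exact_mod_cast hn
  have h0 : (0 : ℝ) ≤ j := Nat.cast_nonneg j
  rw [afun, bfun, div_sub_div _ _ (ne_of_gt h1) (ne_of_gt h2)]
  apply div_pos _ (mul_pos h1 h2)
  nlinarith

lemma b_nonneg (hn : 1 ≤ n) (hq : 1 < q) : 0 ≤ bfun n j q :=
  div_nonneg (Nat.cast_nonneg j) (den_pos hn hq).le

lemma b_lt_a0 (hn : 1 ≤ n) (hq : 1 < q) : bfun n j q < afun n 0 q := by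
  have h2 := den_pos (n := n) (j := j) hn hq
  have h1 := num_pos (n := n) (j := 0) hn hq
  have h1' : (1 : ℝ) ≤ n := by exact_mod_cast hn
  have h0 : (0 : ℝ) ≤ j := Nat.cast_nonneg j
  rw [afun, bfun, div_lt_div_iff₀ h2 (by push_cast at h1 ⊢; linarith)]
  push_cast
  nlinarith

lemma hasDerivAt_g (hn : 1 ≤ n) (hq : 1 < q) :
    HasDerivAt (gfun n j) (gfun n j q * (afun n j q - bfun n j q)) q := by
  have h1 := num_pos (n := n) (j := j) hn hq
  have h2 := den_pos (n := n) (j := j) hn hq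
  have hnum : HasDerivAt (fun q : ℝ => ((n : ℝ) + j) * q - n) ((n : ℝ) + j) q := by
    simpa using (((hasDerivAt_id q).const_mul ((n : ℝ) + j)).sub_const (n : ℝ))
  have hden : HasDerivAt (fun q : ℝ => (j : ℝ) * q + n) (j : ℝ) q := by
    simpa using (((hasDerivAt_id q).const_mul (j : ℝ)).add_const (n : ℝ))
  have := hnum.div hden (ne_of_gt h2)
  refine this.congr_deriv ?_
  rw [gfun, afun, bfun]
  field_simp

lemma hasDerivAt_a (hn : 1 ≤ n) (hq : 1 < q) :
    HasDerivAt (afun n j) (-(afun n j q) ^ 2) q := by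
  have h1 := num_pos (n := n) (j := j) hn hq
  have hnum : HasDerivAt (fun q : ℝ => ((n : ℝ) + j) * q - n) ((n : ℝ) + j) q := by
    simpa using (((hasDerivAt_id q).const_mul ((n : ℝ) + j)).sub_const (n : ℝ))
  have := (hasDerivAt_const q ((n : ℝ) + j)).div hnum (ne_of_gt h1)
  refine this.congr_deriv ?_
  rw [afun]
  field_simp
  ring

lemma hasDerivAt_b (hn : 1 ≤ n) (hq : 1 < q) :
    HasDerivAt (bfun n j) (-(bfun n j q) ^ 2) q := by
  have h2 := den_pos (n := n) (j := j) hn hq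
  have hden : HasDerivAt (fun q : ℝ => (j : ℝ) * q + n) (j : ℝ) q := by
    simpa using (((hasDerivAt_id q).const_mul (j : ℝ)).add_const (n : ℝ))
  have := (hasDerivAt_const q (j : ℝ)).div hden (ne_of_gt h2)
  refine this.congr_deriv ?_
  rw [bfun]
  field_simp
  ring

lemma hasDerivAt_S (hn : 1 ≤ n) (hq : 1 < q) :
    HasDerivAt (Sfun n k)
      (∑ j ∈ Finset.range k, ((bfun n j q) ^ 2 - (afun n j q) ^ 2)) q := by
  have : ∀ j ∈ Finset.range k,
      HasDerivAt (fun q => afun n j q - bfun n j q)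
        ((bfun n j q) ^ 2 - (afun n j q) ^ 2) q := by
    intro j _
    have := (hasDerivAt_a (j := j) hn hq).sub (hasDerivAt_b (j := j) hn hq)
    refine this.congr_deriv ?_
    ring
  exact HasDerivAt.fun_sum this

lemma hasDerivAt_F (hn : 1 ≤ n) (hq : 1 < q) :
    HasDerivAt (Ffun n k) (Ffun n k q * Sfun n k q) q := by
  induction k with
  | zero =>
    simp only [Ffun, Sfun, Finset.range_zero, Finset.prod_empty, Finset.sum_empty, mul_zero]
    exact hasDerivAt_const q 1
  | succ m ih =>
    have hF : Ffun n (m + 1) = fun q => Ffun n m q * gfun n m q := by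
      funext x
      simp [Ffun, Finset.prod_range_succ]
    rw [hF]
    have := ih.mul (hasDerivAt_g (j := m) hn hq)
    refine this.congr_deriv ?_
    simp only [Ffun, Sfun, Finset.prod_range_succ, Finset.sum_range_succ]
    ring

lemma sum_sq_le_sq_sum {s : Finset ℕ} {f : ℕ → ℝ} (hf : ∀ i ∈ s, 0 ≤ f i) :
    ∑ i ∈ s, (f i) ^ 2 ≤ (∑ i ∈ s, f i) ^ 2 := by
  rw [sq, Finset.sum_mul]
  apply Finset.sum_le_sum
  intro i hi
  have : f i ≤ ∑ j ∈ s, f j := Finset.single_le_sum hf hi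
  nlinarith [hf i hi]

lemma key_ineq (hn : 1 ≤ n) (hk : 2 ≤ k) (hq : 1 < q) :
    0 < ∑ j ∈ Finset.range k, ((bfun n j q) ^ 2 - (afun n j q) ^ 2)
        + (Sfun n k q) ^ 2 := by
  obtain ⟨m, rfl⟩ : ∃ m, k = m + 1 := ⟨k - 1, by omega⟩
  have hm : 1 ≤ m := by omega
  set d : ℕ → ℝ := fun j => afun n j q - bfun n j q with hd
  have hb0 : bfun n 0 q = 0 := by simp [bfun]
  -- rewrite sums splitting off j = 0
  have hS : Sfun n (m + 1) q = (∑ j ∈ Finset.range m, d (j + 1)) + d 0 := by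
    rw [Sfun, Finset.sum_range_succ']
  have hsum : ∑ j ∈ Finset.range (m + 1), ((bfun n j q) ^ 2 - (afun n j q) ^ 2)
      = (∑ j ∈ Finset.range m, ((bfun n (j+1) q) ^ 2 - (afun n (j+1) q) ^ 2))
        + (0 - (afun n 0 q) ^ 2) := by
    rw [Finset.sum_range_succ', hb0]
    norm_num
  rw [hS, hsum]
  set T : ℝ := ∑ j ∈ Finset.range m, d (j + 1) with hT
  have hd0 : d 0 = afun n 0 q := by rw [hd]; simp [hb0]
  -- each b² - a² = -(d² + 2 d b)
  have hterm : ∀ j, (bfun n (j+1) q) ^ 2 - (afun n (j+1) q) ^ 2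
      = -((d (j+1)) ^ 2 + 2 * d (j+1) * bfun n (j+1) q) := by
    intro j; rw [hd]; ring
  have hsum2 : ∑ j ∈ Finset.range m, ((bfun n (j+1) q) ^ 2 - (afun n (j+1) q) ^ 2)
      = -(∑ j ∈ Finset.range m, (d (j+1)) ^ 2
          + 2 * ∑ j ∈ Finset.range m, d (j+1) * bfun n (j+1) q) := by
    simp only [hterm]
    rw [Finset.sum_neg_distrib, Finset.sum_add_distrib, Finset.mul_sum]
    congr 1
    congr 1
    apply Finset.sum_congr rfl
    intro j _; ring
  rw [hsum2]
  have hA : ∑ j ∈ Finset.range m, (d (j+1)) ^ 2 ≤ T ^ 2 := by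
    rw [hT]
    exact sum_sq_le_sq_sum fun i _ => (d_pos hn hq).le
  have hB : ∑ j ∈ Finset.range m, d (j+1) * bfun n (j+1) q
      < ∑ j ∈ Finset.range m, d (j+1) * d 0 := by
    apply Finset.sum_lt_sum_of_nonempty
    · exact Finset.nonempty_range_iff.mpr (by omega)
    · intro j _
      have h1 : 0 < d (j+1) := d_pos hn hq
      have h2 : bfun n (j+1) q < d 0 := by rw [hd0]; exact b_lt_a0 hn hq
      exact (mul_lt_mul_iff_right₀ h1).mpr h2
  have hBT : ∑ j ∈ Finset.range m, d (j+1) * d 0 = T * d 0 := by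
    rw [hT, Finset.sum_mul]
  rw [hBT] at hB
  rw [hd0] at hB ⊢
  nlinarith [hA, hB]

lemma Gamma_add_nat' {x : ℝ} (hx : 0 < x) (k : ℕ) :
    Gamma (x + k) = Gamma x * ∏ j ∈ Finset.range k, (x + j) := by
  induction k with
  | zero => simp
  | succ m ih =>
    have hxm : x + (m : ℝ) ≠ 0 := by positivity
    have h : x + ((m : ℕ) + 1 : ℕ) = (x + m) + 1 := by push_cast; ring
    rw [h, Gamma_add_one hxm, ih, Finset.prod_range_succ]
    ring

lemma gammaFun_eq (hn : 1 ≤ n) (hq : 1 < q) :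
    gammaFun n k ((n : ℝ) / q) = Ffun n k q := by
  have hq0 : (0 : ℝ) < q := lt_trans one_pos hq
  have hn' : (1 : ℝ) ≤ n := by exact_mod_cast hn
  set x : ℝ := (n : ℝ) / q with hx
  have hx0 : 0 < x := div_pos (by linarith) hq0
  have hxn : x < n := by
    rw [hx, div_lt_iff₀ hq0]
    nlinarith
  have hnx : 0 < (n : ℝ) - x := by linarith
  rw [gammaFun, Gamma_add_nat' hnx, Gamma_add_nat' hx0]
  have hG1 : Gamma x ≠ 0 := (Gamma_pos_of_pos hx0).ne'
  have hG2 : Gamma ((n : ℝ) - x) ≠ 0 := (Gamma_pos_of_pos hnx).ne'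
  rw [Ffun]
  rw [show Gamma x * (Gamma ((n:ℝ) - x) * ∏ j ∈ Finset.range k, ((n:ℝ) - x + j))
      / (Gamma ((n:ℝ) - x) * (Gamma x * ∏ j ∈ Finset.range k, (x + j)))
      = (∏ j ∈ Finset.range k, ((n:ℝ) - x + j)) / (∏ j ∈ Finset.range k, (x + j)) by
    field_simp]
  rw [← Finset.prod_div_distrib]
  apply Finset.prod_congr rfl
  intro j _
  have hj0 : (0 : ℝ) ≤ j := Nat.cast_nonneg j
  have hden := den_pos (n := n) (j := j) hn hq
  have hxj : 0 < x + j := by linarith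
  rw [gfun, hx]
  rw [div_eq_div_iff (by positivity) (ne_of_gt hden)]
  field_simp
  ring

end GammaAux

open GammaAux in
/-- The function `q ↦ γ_k(n/q)` is strictly convex on `(1, ∞)` for `k ≥ 2`. -/
theorem gammaFun_comp_strictConvexOn (n k : ℕ) (hn : 1 ≤ n) (hk : 2 ≤ k) :
    StrictConvexOn ℝ (Set.Ioi (1 : ℝ)) (fun q => gammaFun n k ((n : ℝ) / q)) := by
  apply strictConvexOn_of_deriv2_pos (convex_Ioi 1)
  · -- continuity
    have hFc : ContinuousOn (Ffun n k) (Set.Ioi (1 : ℝ)) := fun x hx =>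
      ((hasDerivAt_F hn hx).differentiableAt).continuousAt.continuousWithinAt
    exact hFc.congr fun x hx => gammaFun_eq hn hx
  · intro q hq
    rw [interior_Ioi] at hq
    have hmem : Set.Ioi (1 : ℝ) ∈ nhds q := isOpen_Ioi.mem_nhds hq
    have h1 : (fun q => gammaFun n k ((n : ℝ) / q)) =ᶠ[nhds q] Ffun n k :=
      Filter.eventuallyEq_of_mem hmem fun x hx => gammaFun_eq hn hx
    have h2 : deriv (fun q => gammaFun n k ((n : ℝ) / q)) =ᶠ[nhds q]
        fun x => Ffun n k x * Sfun n k x := by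
      apply Filter.eventuallyEq_of_mem hmem
      intro x hx
      have h1x : (fun q => gammaFun n k ((n : ℝ) / q)) =ᶠ[nhds x] Ffun n k :=
        Filter.eventuallyEq_of_mem (isOpen_Ioi.mem_nhds hx) fun y hy => gammaFun_eq hn hy
      rw [h1x.deriv_eq, (hasDerivAt_F hn hx).deriv]
    have hFS : HasDerivAt (fun x => Ffun n k x * Sfun n k x)
        (Ffun n k q * Sfun n k q * Sfun n k q
          + Ffun n k q * ∑ j ∈ Finset.range k, ((bfun n j q) ^ 2 - (afun n j q) ^ 2)) q :=
      (hasDerivAt_F hn hq).mul (hasDerivAt_S hn hq)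
    have : deriv^[2] (fun q => gammaFun n k ((n : ℝ) / q)) q
        = Ffun n k q * Sfun n k q * Sfun n k q
          + Ffun n k q * ∑ j ∈ Finset.range k, ((bfun n j q) ^ 2 - (afun n j q) ^ 2) := by
      show deriv (deriv _) q = _
      rw [h2.deriv_eq, hFS.deriv]
    rw [this]
    have hF := Ffun_pos (k := k) hn hq
    have hkey := key_ineq (k := k) hn hk hq
    nlinarith [hF, hkey]
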